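/- (Lemma 2) Let A be the adjacency matrix of a finite simple undirected graph on N vertices and let A1 be the off-diagonal part of the symmetrically normalized adjacency matrix with added self-loops. Then every real eigenvalue a of A1 (i.e. every a ∈ ℝ for which there exists a nonzero x ∈ ℝ^N with A1 x = a x) satisfies −1 < a < 1. -/

import Mathlib

open Matrix Finset

/-- Lemma 2: Every real eigenvalue `a` of `A1` satisfies
`-1 < a < 1`, where `A1` is the off-diagonal part of the symmetrically
normalized adjacency matrix with added self-loops. -/
theorem gtnet_A1_eigenvalue_bounds
    (N : ℕ) (A : Matrix (Fin N) (Fin N) ℝ)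
    (hsymm : A.IsSymm)
    (h01 : ∀ i j, A i j = 0 ∨ A i j = 1)
    (hdiag : ∀ i, A i i = 0)
    (d : Fin N → ℝ) (hd : ∀ i, d i = ∑ j, A i j)
    (A1 : Matrix (Fin N) (Fin N) ℝ)
    (hA1 : ∀ i j, A1 i j =
      if i = j then 0 else A i j / Real.sqrt ((d i + 1) * (d j + 1))) :
    ∀ (a : ℝ) (x : Fin N → ℝ), x ≠ 0 → A1 *ᵥ x = a • x → -1 < a ∧ a < 1 := by
  intro a x hx hax
  have hA0 : ∀ i j, 0 ≤ A i j := by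
    intro i j; rcases h01 i j with h | h <;> simp [h]
  have hd0 : ∀ i, 0 ≤ d i := by
    intro i; rw [hd i]; exact Finset.sum_nonneg fun j _ => hA0 i j
  set s : Fin N → ℝ := fun i => Real.sqrt (d i + 1) with hs
  have hspos : ∀ i, 0 < s i := fun i => Real.sqrt_pos.mpr (by linarith [hd0 i])
  have hssq : ∀ i, s i * s i = d i + 1 :=
    fun i => Real.mul_self_sqrt (by linarith [hd0 i])
  set y : Fin N → ℝ := fun i => x i / s i with hy
  have hxy : ∀ i, x i = s i * y i := by
    intro i; simp only [hy]; rw [mul_div_assoc', mul_div_cancel_left₀ _ (hspos i).ne']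
  -- the quadratic form identity
  have hsum : a * ∑ i, x i ^ 2 = ∑ i, ∑ j, A1 i j * x j * x i := by
    calc a * ∑ i, x i ^ 2 = ∑ i, (a • x) i * x i := by
          rw [Finset.mul_sum]; exact Finset.sum_congr rfl fun i _ => by
            simp [Pi.smul_apply, smul_eq_mul]; ring
      _ = ∑ i, (A1 *ᵥ x) i * x i := by rw [hax]
      _ = ∑ i, ∑ j, A1 i j * x j * x i := by
          refine Finset.sum_congr rfl fun i _ => ?_
          rw [Matrix.mulVec, dotProduct, Finset.sum_mul]
  -- each term rewritten in terms of y
  have hterm : ∀ i j, A1 i j * x j * x i = (if i = j then 0 else A i j * (y i * y j)) := by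
    intro i j
    rw [hA1 i j]
    by_cases h : i = j
    · simp [h]
    · simp only [if_neg h]
      have : Real.sqrt ((d i + 1) * (d j + 1)) = s i * s j := by
        rw [Real.sqrt_mul (by linarith [hd0 i])]
      rw [this]
      simp only [hy]
      field_simp
  -- bound on each term
  have hbnd : ∀ i j, |A1 i j * x j * x i| ≤ A i j * (y i ^ 2 + y j ^ 2) / 2 := by
    intro i j
    rw [hterm i j]
    by_cases h : i = j
    · subst h
      simp [hdiag i]
    · rw [if_neg h, abs_mul, abs_of_nonneg (hA0 i j)]
      have h1 : |y i * y j| ≤ (y i ^ 2 + y j ^ 2) / 2 := by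
        rw [abs_mul]
        nlinarith [sq_nonneg (|y i| - |y j|), sq_abs (y i), sq_abs (y j), abs_nonneg (y i), abs_nonneg (y j)]
      calc A i j * |y i * y j| ≤ A i j * ((y i ^ 2 + y j ^ 2) / 2) :=
            mul_le_mul_of_nonneg_left h1 (hA0 i j)
        _ = A i j * (y i ^ 2 + y j ^ 2) / 2 := by ring
  -- sum of bounds
  have hsumbnd : ∑ i, ∑ j, A i j * (y i ^ 2 + y j ^ 2) / 2 = ∑ i, d i * y i ^ 2 := by
    have h1 : ∑ i, ∑ j, A i j * y i ^ 2 = ∑ i, d i * y i ^ 2 := by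
      refine Finset.sum_congr rfl fun i _ => ?_
      rw [hd i, Finset.sum_mul]
    have h2 : ∑ i, ∑ j, A i j * y j ^ 2 = ∑ i, d i * y i ^ 2 := by
      rw [Finset.sum_comm]
      refine Finset.sum_congr rfl fun j _ => ?_
      rw [hd j, Finset.sum_mul]
      refine Finset.sum_congr rfl fun i _ => ?_
      rw [hsymm.apply j i]
    calc ∑ i, ∑ j, A i j * (y i ^ 2 + y j ^ 2) / 2
        = (∑ i, ∑ j, A i j * y i ^ 2 + ∑ i, ∑ j, A i j * y j ^ 2) / 2 := by
          rw [← Finset.sum_add_distrib]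
          rw [Finset.sum_div]
          refine Finset.sum_congr rfl fun i _ => ?_
          rw [← Finset.sum_add_distrib, Finset.sum_div]
          refine Finset.sum_congr rfl fun j _ => ?_
          ring
      _ = ∑ i, d i * y i ^ 2 := by rw [h1, h2]; ring
  -- norms
  have hnorm : ∑ i, x i ^ 2 = ∑ i, d i * y i ^ 2 + ∑ i, y i ^ 2 := by
    rw [← Finset.sum_add_distrib]
    refine Finset.sum_congr rfl fun i _ => ?_
    rw [hxy i]
    have := hssq i
    nlinarith [hssq i]
  have hypos : 0 < ∑ i, y i ^ 2 := by
    have : ∃ i, x i ≠ 0 := by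
      by_contra h
      push_neg at h
      exact hx (funext h)
    obtain ⟨i, hi⟩ := this
    have hyi : y i ≠ 0 := by
      simp only [hy]
      exact div_ne_zero hi (hspos i).ne'
    have : 0 < y i ^ 2 := by positivity
    calc (0:ℝ) < y i ^ 2 := this
      _ ≤ ∑ i, y i ^ 2 := Finset.single_le_sum (fun j _ => sq_nonneg (y j)) (Finset.mem_univ i)
  have hdn : 0 ≤ ∑ i, d i * y i ^ 2 :=
    Finset.sum_nonneg fun i _ => mul_nonneg (hd0 i) (sq_nonneg (y i))
  -- final bound
  have hfinal : |a| * ∑ i, x i ^ 2 ≤ ∑ i, d i * y i ^ 2 := by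
    calc |a| * ∑ i, x i ^ 2 = |a * ∑ i, x i ^ 2| := by
          rw [abs_mul, abs_of_nonneg (by positivity : (0:ℝ) ≤ ∑ i, x i ^ 2)]
      _ = |∑ i, ∑ j, A1 i j * x j * x i| := by rw [hsum]
      _ ≤ ∑ i, ∑ j, |A1 i j * x j * x i| := by
          calc |∑ i, ∑ j, A1 i j * x j * x i| ≤ ∑ i, |∑ j, A1 i j * x j * x i| :=
                Finset.abs_sum_le_sum_abs _ _
            _ ≤ ∑ i, ∑ j, |A1 i j * x j * x i| :=
                Finset.sum_le_sum fun i _ => Finset.abs_sum_le_sum_abs _ _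
      _ ≤ ∑ i, ∑ j, A i j * (y i ^ 2 + y j ^ 2) / 2 :=
          Finset.sum_le_sum fun i _ => Finset.sum_le_sum fun j _ => hbnd i j
      _ = ∑ i, d i * y i ^ 2 := hsumbnd
  have hlt : |a| < 1 := by
    by_contra h
    push_neg at h
    have hS : 0 < ∑ i, x i ^ 2 := by rw [hnorm]; linarith
    have h2 : ∑ i, x i ^ 2 ≤ |a| * ∑ i, x i ^ 2 := le_mul_of_one_le_left hS.le h
    rw [hnorm] at hfinal h2
    linarith
  exact abs_lt.mp hlt
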